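/- Let E be a Banach space and {T_u : u ∈ ℝ₊^d} a strongly continuous semigroup of linear contractions of E with T_0 = id. Fix t₀ > 0, y ∈ E, and set x = t₀^{−d} ∫_{[0,t₀]^d} T_u(y) du. Then for all 0 < v₁,…,v_d ≤ v < t₀ with v = max vᵢ, writing 𝐯 = (v₁,…,v_d), one has ‖T_𝐯(x) − x‖ ≤ 2 (t₀^d − (t₀ − v)^d) t₀^{−d} ‖y‖. -/

import Mathlib

open MeasureTheory Filter

/-- Key estimate in Lemma 3.1: with `x = t₀^{-d} ∫_{[0,t₀]^d} T_u y du`, for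
`0 < vᵢ ≤ v < t₀` one has `‖T_𝐯 x − x‖ ≤ 2 (t₀^d − (t₀−v)^d) t₀^{-d} ‖y‖`. -/
theorem shift_of_average_estimate
    {E : Type*} [NormedAddCommGroup E] [NormedSpace ℝ E] [CompleteSpace E]
    (d : ℕ) (hd : 1 ≤ d)
    (T : (Fin d → ℝ) → (E →L[ℝ] E))
    (hsemi : ∀ u v : Fin d → ℝ, 0 ≤ u → 0 ≤ v → T (u + v) = (T u).comp (T v))
    (hid : T 0 = ContinuousLinearMap.id ℝ E)
    (hcontr : ∀ u : Fin d → ℝ, 0 ≤ u → ‖T u‖ ≤ 1)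
    (hcont : ∀ z : E, ContinuousOn (fun u => T u z) {u : Fin d → ℝ | 0 ≤ u})
    (t₀ : ℝ) (ht₀ : 0 < t₀) (y : E)
    (x : E) (hx : x = (t₀ ^ d)⁻¹ • ∫ u in Set.Icc (0 : Fin d → ℝ) (fun _ => t₀), T u y)
    (w : Fin d → ℝ) (v : ℝ) (hw : ∀ i, 0 < w i ∧ w i ≤ v)
    (hv : v < t₀) (hmax : ∃ i, w i = v) :
    ‖T w x - x‖ ≤ 2 * (t₀ ^ d - (t₀ - v) ^ d) / t₀ ^ d * ‖y‖ := by
  classical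
  set f : (Fin d → ℝ) → E := fun u => T u y with hf
  have hw0 : (0 : Fin d → ℝ) ≤ w := fun i => (hw i).1.le
  have hwv : ∀ i, w i ≤ v := fun i => (hw i).2
  have hwt : w ≤ (fun _ => t₀) := fun i => ((hw i).2.trans hv.le)
  set s : Set (Fin d → ℝ) := Set.Icc 0 (fun _ => t₀) with hs
  set s' : Set (Fin d → ℝ) := Set.Icc w (w + fun _ => t₀) with hs'
  set c : Set (Fin d → ℝ) := Set.Icc w (fun _ => t₀) with hc
  have hcs : c ⊆ s := Set.Icc_subset_Icc hw0 le_rfl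
  have hcs' : c ⊆ s' := Set.Icc_subset_Icc le_rfl (fun i => by
    simp only [Pi.add_apply]; linarith [(hw i).1])
  have hs_pos : s ⊆ {u : Fin d → ℝ | 0 ≤ u} := fun u hu => hu.1
  have hs'_pos : s' ⊆ {u : Fin d → ℝ | 0 ≤ u} := fun u hu i => le_trans (hw0 i) (hu.1 i)
  -- integrability
  have hint : ∀ t : Set (Fin d → ℝ), t ⊆ {u | 0 ≤ u} → IsCompact t → IntegrableOn f t :=
    fun t ht hct => ContinuousOn.integrableOn_compact hct (((hcont y).mono ht))
  have hint_s : IntegrableOn f s := hint s hs_pos isCompact_Icc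
  have hint_s' : IntegrableOn f s' := hint s' hs'_pos isCompact_Icc
  -- step 1 : T w x = (t₀^d)⁻¹ • ∫ u in s', f u
  have key : T w x = (t₀ ^ d)⁻¹ • ∫ u in s', f u := by
    rw [hx, (T w).map_smul]
    congr 1
    rw [← ContinuousLinearMap.integral_comp_comm (T w) hint_s]
    have h1 : ∀ u ∈ s, T w (f u) = f (w + u) := by
      intro u hu
      simp only [hf]
      rw [hsemi w u hw0 hu.1]
      rfl
    rw [setIntegral_congr_fun (measurableSet_Icc) h1]
    have hemb : MeasurableEmbedding (fun u : Fin d → ℝ => w + u) :=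
      (Homeomorph.addLeft w).measurableEmbedding
    have hpres : MeasurePreserving (fun u : Fin d → ℝ => w + u) volume volume :=
      measurePreserving_add_left volume w
    have hpre : (fun u : Fin d → ℝ => w + u) ⁻¹' s' = s := by
      rw [hs', hs, Set.preimage_const_add_Icc]
      simp
    rw [← hs, ← hpre, hpres.setIntegral_preimage_emb hemb]
  -- step 2: decompose
  have hsplit : T w x - x = (t₀ ^ d)⁻¹ • ((∫ u in s' \ c, f u) - ∫ u in s \ c, f u) := by
    rw [key, hx, ← smul_sub]
    congr 1
    rw [integral_diff measurableSet_Icc hint_s' hcs',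
        integral_diff measurableSet_Icc hint_s hcs]
    abel
  -- measure computations
  have hcfin : volume c ≠ ⊤ := (isCompact_Icc.measure_lt_top).ne
  have hs'fin : volume s' ≠ ⊤ := (isCompact_Icc.measure_lt_top).ne
  have hsfin : volume s ≠ ⊤ := (isCompact_Icc.measure_lt_top).ne
  have hmeas_s' : (volume (s' \ c)).toReal = t₀ ^ d - ∏ i, (t₀ - w i) := by
    rw [measure_diff hcs' measurableSet_Icc.nullMeasurableSet hcfin,
      ENNReal.toReal_sub_of_le (measure_mono hcs') hs'fin, hs', hc,
      Real.volume_Icc_pi_toReal hwt, Real.volume_Icc_pi_toReal (by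
        intro i; simp only [Pi.add_apply]; linarith [(hw i).1])]
    simp [Finset.prod_const, Finset.card_univ]
  have hmeas_s : (volume (s \ c)).toReal = t₀ ^ d - ∏ i, (t₀ - w i) := by
    rw [measure_diff hcs measurableSet_Icc.nullMeasurableSet hcfin,
      ENNReal.toReal_sub_of_le (measure_mono hcs) hsfin, hs, hc,
      Real.volume_Icc_pi_toReal hwt,
      Real.volume_Icc_pi_toReal (a := (0 : Fin d → ℝ)) (fun i => ht₀.le)]
    simp [Finset.prod_const, Finset.card_univ]
  -- norm bounds
  have hfb : ∀ u : Fin d → ℝ, 0 ≤ u → ‖f u‖ ≤ ‖y‖ := by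
    intro u hu
    calc ‖T u y‖ ≤ ‖T u‖ * ‖y‖ := (T u).le_opNorm y
    _ ≤ 1 * ‖y‖ := mul_le_mul_of_nonneg_right (hcontr u hu) (norm_nonneg y)
    _ = ‖y‖ := one_mul _
  have hbnd : ∀ t : Set (Fin d → ℝ), t ⊆ {u | 0 ≤ u} → MeasurableSet t → volume t < ⊤ →
      ‖∫ u in t, f u‖ ≤ (volume t).toReal * ‖y‖ := by
    intro t ht hmt hft
    rw [mul_comm]
    exact norm_setIntegral_le_of_norm_le_const hft
      (fun u hu => hfb u (ht hu))
  have hb1 : ‖∫ u in s' \ c, f u‖ ≤ (t₀ ^ d - ∏ i, (t₀ - w i)) * ‖y‖ := by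
    rw [← hmeas_s']
    exact hbnd _ (fun u hu => hs'_pos hu.1) (measurableSet_Icc.diff measurableSet_Icc)
      (lt_of_le_of_lt (measure_mono Set.diff_subset) (IsCompact.measure_lt_top isCompact_Icc))
  have hb2 : ‖∫ u in s \ c, f u‖ ≤ (t₀ ^ d - ∏ i, (t₀ - w i)) * ‖y‖ := by
    rw [← hmeas_s]
    exact hbnd _ (fun u hu => hs_pos hu.1) (measurableSet_Icc.diff measurableSet_Icc)
      (lt_of_le_of_lt (measure_mono Set.diff_subset) (IsCompact.measure_lt_top isCompact_Icc))
  -- final arithmetic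
  have hP : (t₀ - v) ^ d ≤ ∏ i, (t₀ - w i) := by
    calc (t₀ - v) ^ d = ∏ _i : Fin d, (t₀ - v) := by
          simp [Finset.prod_const, Finset.card_univ]
    _ ≤ ∏ i, (t₀ - w i) := by
          apply Finset.prod_le_prod (fun i _ => by linarith) (fun i _ => by linarith [hwv i])
  have ht₀d : (0:ℝ) < t₀ ^ d := pow_pos ht₀ d
  calc ‖T w x - x‖ = (t₀ ^ d)⁻¹ * ‖(∫ u in s' \ c, f u) - ∫ u in s \ c, f u‖ := by
        rw [hsplit, norm_smul, Real.norm_eq_abs, abs_of_nonneg (by positivity)]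
  _ ≤ (t₀ ^ d)⁻¹ * (‖∫ u in s' \ c, f u‖ + ‖∫ u in s \ c, f u‖) :=
        mul_le_mul_of_nonneg_left (norm_sub_le _ _) (by positivity)

  _ ≤ (t₀ ^ d)⁻¹ * ((t₀ ^ d - ∏ i, (t₀ - w i)) * ‖y‖ + (t₀ ^ d - ∏ i, (t₀ - w i)) * ‖y‖) := by
        gcongr
  _ = 2 * (t₀ ^ d - ∏ i, (t₀ - w i)) / t₀ ^ d * ‖y‖ := by ring
  _ ≤ 2 * (t₀ ^ d - (t₀ - v) ^ d) / t₀ ^ d * ‖y‖ := by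
        gcongr 2 * ?_ / t₀ ^ d * ‖y‖
        linarith [hP]
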